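/- Let a > 0, α ∈ (0,1) and β ∈ ℝ. Then there exists a constant C > 0 such that for every t ∈ (0,a]: ∫_0^t s^{α−1} ℓ_a(s)^{β} ds ≤ C · t^{α} ℓ_a(t)^{β}. -/

import Mathlib

open MeasureTheory Set Real

/-- For `x ≥ 1` and `ε > 0`, `log x ≤ (1/ε) x^ε`. -/
lemma aux_log_le_rpow {x ε : ℝ} (hx : 1 ≤ x) (hε : 0 < ε) :
    Real.log x ≤ (1 / ε) * x ^ ε := by
  have hx0 : 0 < x := lt_of_lt_of_le one_pos hx
  have h1 : Real.log (x ^ ε) ≤ x ^ ε - 1 :=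
    Real.log_le_sub_one_of_pos (Real.rpow_pos_of_pos hx0 ε)
  rw [Real.log_rpow hx0] at h1
  have h2 : ε * Real.log x ≤ x ^ ε := by linarith
  rw [div_mul_eq_mul_div, one_mul, le_div_iff₀ hε, mul_comm]
  exact h2

/-- For `a > 0`, `α ∈ (0,1)`, `β ∈ ℝ`, with `ℓ_a(s) = log(e a / s)`,
one has `∫_0^t s^{α−1} ℓ_a(s)^{β} ds ≤ C t^{α} ℓ_a(t)^{β}` on `(0,a]`,
with `C` independent of `t`. -/
theorem stmt_9 (a α β : ℝ) (ha : 0 < a) (hα0 : 0 < α) (hα1 : α < 1) :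
    ∃ C : ℝ, 0 < C ∧ ∀ t ∈ Ioc (0 : ℝ) a,
      (∫ s in Ioo (0 : ℝ) t, s ^ (α - 1) * Real.log (Real.exp 1 * a / s) ^ β) ≤
        C * (t ^ α * Real.log (Real.exp 1 * a / t) ^ β) := by
  set c : ℝ := α / 2 with hc_def
  have hc : 0 < c := by positivity
  set M : ℝ := max 1 ((1 + 2 * β / α) ^ β) with hM_def
  have hM1 : (1 : ℝ) ≤ M := le_max_left _ _
  have hM0 : 0 < M := lt_of_lt_of_le one_pos hM1
  refine ⟨2 * M / α, by positivity, ?_⟩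
  rintro t ⟨ht0, hta⟩
  set L : ℝ := Real.log (Real.exp 1 * a / t) with hL_def
  have he1 : (1 : ℝ) < Real.exp 1 := by
    have := Real.exp_one_gt_d9; linarith
  have hL1 : 1 ≤ L := by
    have h1 : Real.exp 1 ≤ Real.exp 1 * a / t := by
      rw [le_div_iff₀ ht0]
      have : t ≤ a := hta
      nlinarith [Real.exp_pos 1]
    calc (1 : ℝ) = Real.log (Real.exp 1) := (Real.log_exp 1).symm
      _ ≤ L := Real.log_le_log (Real.exp_pos 1) h1
  have hL0 : 0 < L := lt_of_lt_of_le one_pos hL1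
  -- Pointwise bound
  have key : ∀ s ∈ Ioo (0 : ℝ) t,
      s ^ (α - 1) * Real.log (Real.exp 1 * a / s) ^ β ≤ (M * L ^ β * t ^ c) * s ^ (c - 1) := by
    rintro s ⟨hs0, hst⟩
    set ℓ : ℝ := Real.log (Real.exp 1 * a / s) with hℓ_def
    have hea_s : 0 < Real.exp 1 * a / s := by positivity
    have hts1 : 1 ≤ t / s := (one_le_div hs0).mpr hst.le
    have hsplit : ℓ = L + Real.log (t / s) := by
      have heq : Real.exp 1 * a / s = (Real.exp 1 * a / t) * (t / s) := by
        field_simp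
      rw [hℓ_def, heq, Real.log_mul (ne_of_gt (by positivity)) (ne_of_gt (by positivity))]
    have hℓL : L ≤ ℓ := by
      rw [hsplit]
      have : 0 ≤ Real.log (t / s) := Real.log_nonneg hts1
      linarith
    have hℓ0 : 0 < ℓ := lt_of_lt_of_le hL0 hℓL
    have hsc : s ^ (α - 1) = s ^ (c - 1) * s ^ c := by
      rw [← Real.rpow_add hs0, hc_def]; ring_nf
    have hstc : s ^ c ≤ t ^ c := Real.rpow_le_rpow hs0.le hst.le hc.le
    rcases le_or_gt β 0 with hβ | hβ
    · -- β ≤ 0 : ℓ^β ≤ L^β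
      have h1 : ℓ ^ β ≤ L ^ β := Real.rpow_le_rpow_of_nonpos hL0 hℓL hβ
      have h2 : s ^ (α - 1) * ℓ ^ β ≤ (s ^ (c - 1) * t ^ c) * L ^ β := by
        rw [hsc]
        have hs1 : (0:ℝ) ≤ s ^ (c - 1) := (Real.rpow_pos_of_pos hs0 _).le
        have hℓβ : (0:ℝ) ≤ ℓ ^ β := (Real.rpow_pos_of_pos hℓ0 _).le
        have hLβ : (0:ℝ) ≤ L ^ β := (Real.rpow_pos_of_pos hL0 _).le
        calc s ^ (c - 1) * s ^ c * ℓ ^ β ≤ s ^ (c - 1) * t ^ c * L ^ β := by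
              apply mul_le_mul _ h1 hℓβ (by positivity)
              exact mul_le_mul_of_nonneg_left hstc hs1
          _ = (s ^ (c - 1) * t ^ c) * L ^ β := by ring
      calc s ^ (α - 1) * ℓ ^ β ≤ (s ^ (c - 1) * t ^ c) * L ^ β := h2
        _ ≤ (M * L ^ β * t ^ c) * s ^ (c - 1) := by
          have : (s ^ (c - 1) * t ^ c) * L ^ β = (1 * L ^ β * t ^ c) * s ^ (c-1) := by ring
          rw [this]
          have hLβ : (0:ℝ) ≤ L ^ β := (Real.rpow_pos_of_pos hL0 _).le
          have := Real.rpow_pos_of_pos hs0 (c-1)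
          have := Real.rpow_pos_of_pos ht0 c
          apply mul_le_mul_of_nonneg_right _ (by positivity)
          apply mul_le_mul_of_nonneg_right _ (by positivity)
          exact mul_le_mul_of_nonneg_right hM1 hLβ
    · -- β > 0
      set ε : ℝ := c / β with hε_def
      have hε : 0 < ε := by positivity
      have hεβ : ε * β = c := by rw [hε_def]; field_simp
      have hlog : Real.log (t / s) ≤ (1 / ε) * (t / s) ^ ε := aux_log_le_rpow hts1 hε
      have hts_pow1 : 1 ≤ (t / s) ^ ε := by
        calc (1:ℝ) = 1 ^ ε := (Real.one_rpow ε).symm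
          _ ≤ (t / s) ^ ε := Real.rpow_le_rpow zero_le_one hts1 hε.le
      have hℓ_le : ℓ ≤ L * ((1 + 1 / ε) * (t / s) ^ ε) := by
        rw [hsplit]
        have h3 : L + Real.log (t/s) ≤ L + (1/ε) * (t/s)^ε := by linarith
        have h4 : L + (1/ε) * (t/s)^ε ≤ L * (1 + (1/ε) * (t/s)^ε) := by
          have : 0 ≤ (1/ε) * (t/s)^ε := by positivity
          nlinarith
        have h5 : 1 + (1/ε) * (t/s)^ε ≤ (1 + 1/ε) * (t/s)^ε := by nlinarith [hε.le]
        calc L + Real.log (t/s) ≤ L * (1 + (1/ε) * (t/s)^ε) := le_trans h3 h4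
          _ ≤ L * ((1 + 1/ε) * (t/s)^ε) := mul_le_mul_of_nonneg_left h5 hL0.le
      have hℓβ_le : ℓ ^ β ≤ L ^ β * (1 + 1/ε) ^ β * (t/s) ^ c := by
        have h6 : ℓ ^ β ≤ (L * ((1 + 1/ε) * (t/s)^ε)) ^ β :=
          Real.rpow_le_rpow hℓ0.le hℓ_le hβ.le
        have h7 : (L * ((1 + 1/ε) * (t/s)^ε)) ^ β
            = L ^ β * ((1 + 1/ε) ^ β * ((t/s)^ε) ^ β) := by
          rw [Real.mul_rpow hL0.le (by positivity), Real.mul_rpow (by positivity) (by positivity)]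
        have h8 : ((t/s)^ε) ^ β = (t/s) ^ c := by
          rw [← Real.rpow_mul (by positivity : (0:ℝ) ≤ t / s), hεβ]
        rw [h7, h8] at h6
        linarith [h6]
      have hdiv : (t/s) ^ c = t ^ c / s ^ c := Real.div_rpow ht0.le hs0.le c
      have hMle : (1 + 1/ε) ^ β ≤ M := by
        have : (1:ℝ) + 1/ε = 1 + 2 * β / α := by
          rw [hε_def, hc_def]; field_simp
        rw [this]; exact le_max_right _ _
      have hsplit2 : s ^ (α - 1) / s ^ c = s ^ (c - 1) := by
        rw [← Real.rpow_sub hs0, hc_def]; ring_nf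
      have hsα : 0 < s ^ (α - 1) := Real.rpow_pos_of_pos hs0 _
      have hLβ : (0:ℝ) < L ^ β := Real.rpow_pos_of_pos hL0 _
      have htc : (0:ℝ) < t ^ c := Real.rpow_pos_of_pos ht0 _
      have hsc' : (0:ℝ) < s ^ c := Real.rpow_pos_of_pos hs0 _
      calc s ^ (α - 1) * ℓ ^ β ≤ s ^ (α - 1) * (L ^ β * (1 + 1/ε) ^ β * (t/s) ^ c) :=
            mul_le_mul_of_nonneg_left hℓβ_le hsα.le
        _ ≤ s ^ (α - 1) * (L ^ β * M * (t/s) ^ c) := by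
            apply mul_le_mul_of_nonneg_left _ hsα.le
            apply mul_le_mul_of_nonneg_right _ (by rw [hdiv]; positivity)
            exact mul_le_mul_of_nonneg_left hMle hLβ.le
        _ = (M * L ^ β * t ^ c) * s ^ (c - 1) := by
            rw [hdiv, ← hsplit2]; field_simp
  -- Integrability of the dominating function
  have hint0 : IntegrableOn (fun s : ℝ => s ^ (c - 1)) (Ioo 0 t) := by
    have h := intervalIntegral.intervalIntegrable_rpow' (a := 0) (b := t) (r := c - 1)
      (by linarith)
    rw [intervalIntegrable_iff_integrableOn_Ioc_of_le ht0.le] at h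
    exact h.mono_set Ioo_subset_Ioc_self
  have hint : IntegrableOn (fun s : ℝ => (M * L ^ β * t ^ c) * s ^ (c - 1)) (Ioo 0 t) :=
    hint0.const_mul _
  -- Integral comparison
  have h1 : (∫ s in Ioo (0 : ℝ) t, s ^ (α - 1) * Real.log (Real.exp 1 * a / s) ^ β)
      ≤ ∫ s in Ioo (0 : ℝ) t, (M * L ^ β * t ^ c) * s ^ (c - 1) := by
    apply integral_mono_of_nonneg _ hint
    · filter_upwards [self_mem_ae_restrict measurableSet_Ioo] with s hs
      exact key s hs
    · filter_upwards [self_mem_ae_restrict measurableSet_Ioo] with s hs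
      rcases hs with ⟨hs0, hst⟩
      have h1 : (0:ℝ) ≤ s ^ (α - 1) := (Real.rpow_pos_of_pos hs0 _).le
      have h2 : (0:ℝ) < Real.exp 1 * a / s := by positivity
      have h3 : (0:ℝ) ≤ Real.log (Real.exp 1 * a / s) ^ β := by
        apply Real.rpow_nonneg
        apply Real.log_nonneg
        rw [le_div_iff₀ hs0]
        nlinarith [Real.exp_one_gt_d9, hst.trans_le hta]
      positivity
  -- Compute the dominating integral
  have h2 : (∫ s in Ioo (0 : ℝ) t, (M * L ^ β * t ^ c) * s ^ (c - 1))
      = (M * L ^ β * t ^ c) * (t ^ c / c) := by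
    rw [integral_const_mul]
    congr 1
    rw [← integral_Ioc_eq_integral_Ioo, ← intervalIntegral.integral_of_le ht0.le]
    rw [integral_rpow (Or.inl (by linarith))]
    have : c - 1 + 1 = c := by ring
    rw [this, Real.zero_rpow (by positivity : c ≠ 0)]
    ring
  have h3 : (M * L ^ β * t ^ c) * (t ^ c / c) = (2 * M / α) * (t ^ α * L ^ β) := by
    have : t ^ c * t ^ c = t ^ α := by
      rw [← Real.rpow_add ht0, hc_def]; ring_nf
    calc M * L ^ β * t ^ c * (t ^ c / c) = (t ^ c * t ^ c) * (M * L ^ β / c) := by ring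
      _ = t ^ α * (M * L ^ β / c) := by rw [this]
      _ = (2 * M / α) * (t ^ α * L ^ β) := by
          rw [show c = α / 2 from hc_def]; field_simp
  calc (∫ s in Ioo (0 : ℝ) t, s ^ (α - 1) * Real.log (Real.exp 1 * a / s) ^ β)
      ≤ (M * L ^ β * t ^ c) * (t ^ c / c) := by rw [← h2]; exact h1
    _ = (2 * M / α) * (t ^ α * L ^ β) := h3
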